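/- Suppose |V_c| = 1 for every prompt c. Then the expected false negative rate over a uniformly random threshold equals half the generative error rate: Pr_{t∼Unif[0,1], (c,r)∼D}[f̂_t(c,r) = − and f(c,r) = +] = err/2. -/

import Mathlib

open Finset

open scoped Classical

lemma step_integral (p v : ℝ) (h0 : 0 ≤ p) (h1 : p ≤ 1) :
    (∫ t in (0:ℝ)..1, (if p ≤ t then v else 0)) = v * (1 - p) := by
  have hmeas : (MeasureTheory.volume (Set.Ici p ∩ Set.Ioc 0 1)) = ENNReal.ofReal (1 - p) := by
    apply le_antisymm
    · calc MeasureTheory.volume (Set.Ici p ∩ Set.Ioc 0 1)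
          ≤ MeasureTheory.volume (Set.Icc p 1) := by
            apply MeasureTheory.measure_mono
            rintro x ⟨hx1, hx2⟩; exact ⟨hx1, hx2.2⟩
        _ = ENNReal.ofReal (1 - p) := Real.volume_Icc
    · calc ENNReal.ofReal (1 - p) = MeasureTheory.volume (Set.Ioc p 1) := Real.volume_Ioc.symm
        _ ≤ MeasureTheory.volume (Set.Ici p ∩ Set.Ioc 0 1) := by
            apply MeasureTheory.measure_mono
            rintro x ⟨hx1, hx2⟩; exact ⟨le_of_lt hx1, lt_of_le_of_lt h0 hx1, hx2⟩
  have hfun : (fun t => if p ≤ t then v else 0) = Set.indicator (Set.Ici p) (fun _ => v) := by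
    funext t
    simp [Set.indicator, Set.mem_Ici]
  rw [intervalIntegral.integral_of_le (by norm_num : (0:ℝ) ≤ 1), hfun,
    MeasureTheory.integral_indicator measurableSet_Ici,
    MeasureTheory.setIntegral_const, MeasureTheory.Measure.real, MeasureTheory.Measure.restrict_apply measurableSet_Ici,
    hmeas, ENNReal.toReal_ofReal (by linarith), smul_eq_mul, mul_comm]

/-- In the pure multiple-choice setting, the expected false negative
rate over a uniformly random threshold `t ∈ [0,1]` equals half the generative error rate:
`Pr_{t,(c,r)∼D}[f̂_t = − ∧ f = +] = err / 2`. -/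
theorem stmt8 {C R : Type} [Fintype C] [Nonempty C] [Fintype R]
    (μ : C → ℝ) (hμ0 : ∀ c, 0 ≤ μ c) (hμ1 : ∑ c, μ c = 1)
    (Rset : C → Finset R) (a : C → R)
    (ha : ∀ c, a c ∈ Rset c)
    (hEne : ∀ c, (Rset c \ {a c}).Nonempty)
    (phat : C → R → ℝ)
    (hphat0 : ∀ c r, 0 ≤ phat c r)
    (hphat1 : ∀ c, ∑ r ∈ Rset c, phat c r = 1)
    (hphatsupp : ∀ c, ∀ r ∉ Rset c, phat c r = 0) :
    -- D: with prob 1/2 draw c ∼ μ and r = a_c; with prob 1/2 draw c ∼ μ and r uniform in E_c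
    let D : C → R → ℝ := fun c r => (if r = a c then μ c / 2 else 0) +
      (if r ∈ Rset c \ {a c} then μ c / (2 * ((Rset c \ {a c}).card : ℝ)) else 0)
    -- false negative probability at threshold t: f̂_t(c,r) = − and f(c,r) = +
    let FN : ℝ → ℝ := fun t => ∑ c, ∑ r ∈ Rset c,
      if ¬ (phat c r > t) ∧ r = a c then D c r else 0
    -- generative error rate
    let err : ℝ := ∑ c, μ c * ∑ r ∈ Rset c \ {a c}, phat c r
    (∫ t in (0:ℝ)..1, FN t) = err / 2 := by
  intro D FN err
  have hDa : ∀ c, D c (a c) = μ c / 2 := by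
    intro c
    simp [D]
  have hFN : ∀ t, FN t = ∑ c, (if phat c (a c) ≤ t then μ c / 2 else 0) := by
    intro t
    apply Finset.sum_congr rfl
    intro c _
    rw [Finset.sum_eq_single (a c)]
    · by_cases h : phat c (a c) ≤ t
      · simp [h, not_lt.mpr h, hDa c]
      · simp [h, lt_of_not_ge h]
    · intro r _ hr
      simp [hr]
    · intro h; exact absurd (ha c) h
  have hp1 : ∀ c, phat c (a c) ≤ 1 := by
    intro c
    rw [← hphat1 c]
    exact Finset.single_le_sum (fun r _ => hphat0 c r) (ha c)
  have hintegral : (∫ t in (0:ℝ)..1, FN t)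
      = ∑ c, (μ c / 2) * (1 - phat c (a c)) := by
    calc (∫ t in (0:ℝ)..1, FN t)
        = ∫ t in (0:ℝ)..1, ∑ c, (if phat c (a c) ≤ t then μ c / 2 else 0) := by
          apply intervalIntegral.integral_congr
          intro t _; exact hFN t
      _ = ∑ c, ∫ t in (0:ℝ)..1, (if phat c (a c) ≤ t then μ c / 2 else 0) := by
          apply intervalIntegral.integral_finset_sum
          intro c _
          apply Monotone.intervalIntegrable
          intro x y hxy
          by_cases h : phat c (a c) ≤ x
          · simp [h, h.trans hxy]
          · by_cases h' : phat c (a c) ≤ y <;>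
              simp [h, h', div_nonneg (hμ0 c) (by norm_num : (0:ℝ) ≤ 2)]
      _ = ∑ c, (μ c / 2) * (1 - phat c (a c)) := by
          apply Finset.sum_congr rfl
          intro c _
          exact step_integral _ _ (hphat0 c (a c)) (hp1 c)
  rw [hintegral]
  have herrsum : ∀ c, ∑ r ∈ Rset c \ {a c}, phat c r = 1 - phat c (a c) := by
    intro c
    have := Finset.sum_erase_add (Rset c) (phat c) (ha c)
    rw [Finset.sdiff_singleton_eq_erase]
    rw [hphat1 c] at this
    linarith
  show _ = err / 2
  simp only [err, herrsum]
  rw [Finset.sum_div]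
  apply Finset.sum_congr rfl
  intro c _
  ring
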